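/- Let p ∈ [2, ∞) and let (X, Y) be a random pair in ℝ^d × ℝ with E[|Y|^p] < ∞ and E[|X^j|^p] < ∞ for all j ∈ {1,…,d}. Let w*_p be a minimizer of R_p and H_p = E[|⟨w*_p, X⟩ − Y|^{p−2} X Xᵀ]. Then for all w ∈ ℝ^d: R_p(w) − R_p(w*_p) ≤ (2p/(p−1)) (w − w*_p)ᵀ H_p (w − w*_p) + p^p E[|⟨w − w*_p, X⟩|^p]. -/

import Mathlib

set_option maxHeartbeats 1000000

open MeasureTheory Matrix
open Real

namespace ERUB



/-- square-to-rpow conversion -/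
lemma rpow_sq_abs (x r : ℝ) : ((x^2 : ℝ)) ^ r = |x| ^ (2*r) := by
  rw [← sq_abs, ← Real.rpow_natCast |x| 2, ← Real.rpow_mul (abs_nonneg x)]
  norm_num

/-- gradient inequality for rpow from Bernoulli -/
lemma grad_ineq {q x y : ℝ} (hq : 1 ≤ q) (hy : 0 ≤ y) (hxy : y ≤ x) :
    x ^ q - y ^ q ≤ q * x ^ (q - 1) * (x - y) := by
  have hx : 0 ≤ x := hy.trans hxy
  rcases hx.eq_or_lt with h0 | hx0
  · have hy0 : y = 0 := le_antisymm (h0 ▸ hxy) hy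
    rw [← h0, hy0]
    simp [Real.zero_rpow (by linarith : q ≠ 0)]
  · have hs : (-1:ℝ) ≤ y / x - 1 := by
      have : 0 ≤ y / x := div_nonneg hy hx0.le
      linarith
    have hb := one_add_mul_self_le_rpow_one_add hs hq
    have h1 : 1 + (y/x - 1) = y / x := by ring
    rw [h1, Real.div_rpow hy hx0.le] at hb
    have hxq : 0 < x ^ q := Real.rpow_pos_of_pos hx0 q
    have hx1 : x ^ (q-1) * x = x ^ q := by
      rw [← Real.rpow_add_one hx0.ne' (q-1)]; ring_nf
    have h2 : x ^ q * (1 + q * (y/x - 1)) ≤ y ^ q := by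
      calc x ^ q * (1 + q * (y/x - 1)) ≤ x ^ q * (y ^ q / x ^ q) :=
            mul_le_mul_of_nonneg_left hb hxq.le
        _ = y ^ q := by field_simp
    have h3 : x ^ q * (q * (y/x - 1)) = q * x^(q-1) * (y - x) := by
      rw [← hx1]; field_simp
    nlinarith [h2, h3]

/-- (1+x)^r ≤ exp (x*r) for x, r ≥ 0 -/
lemma one_add_rpow_le_exp {x r : ℝ} (hx : 0 ≤ x) (hr : 0 ≤ r) :
    (1 + x) ^ r ≤ Real.exp (x * r) := by
  have h1 : (1:ℝ) + x ≤ Real.exp x := by linarith [Real.add_one_le_exp x]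
  calc (1 + x) ^ r ≤ (Real.exp x) ^ r :=
        Real.rpow_le_rpow (by linarith) h1 hr
    _ = Real.exp (x * r) := (Real.exp_mul x r).symm

noncomputable def psi (p x : ℝ) : ℝ := |x| ^ (p-2) * x

lemma psi_neg (p t : ℝ) : psi p (-t) = - psi p t := by simp [psi]

lemma psi_nonneg_val {p t : ℝ} (hp : 2 ≤ p) (ht : 0 ≤ t) : psi p t = t ^ (p-1) := by
  rcases ht.eq_or_lt with h0 | h0
  · rw [← h0]; simp [psi, Real.zero_rpow (by linarith : p - (1:ℝ) ≠ 0)]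
  · rw [psi, abs_of_pos h0, ← Real.rpow_add_one h0.ne']
    ring_nf


lemma psi_lip_max {p x y : ℝ} (hp : 2 ≤ p) (hxy : y ≤ x) :
    psi p x - psi p y ≤ (p-1) * (x - y) * (max |x| |y|) ^ (p-2) := by
  have hp1 : (1:ℝ) ≤ p - 1 := by linarith
  rcases le_or_gt 0 y with hy | hy
  · -- 0 ≤ y ≤ x
    have hx : 0 ≤ x := hy.trans hxy
    have hM : max |x| |y| = x := by
      rw [abs_of_nonneg hx, abs_of_nonneg hy]; exact max_eq_left hxy
    rw [psi_nonneg_val hp hx, psi_nonneg_val hp hy, hM]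
    have := grad_ineq hp1 hy hxy
    calc x ^ (p-1) - y ^ (p-1) ≤ (p-1) * x ^ (p-1-1) * (x - y) := this
      _ = (p-1) * (x-y) * x ^ (p-2) := by rw [show p-1-1 = p-2 by ring]; ring
  · rcases le_or_gt 0 x with hx | hx
    · -- y < 0 ≤ x
      have hpx : psi p x = x ^ (p-1) := psi_nonneg_val hp hx
      have hpy : psi p y = - (-y) ^ (p-1) := by
        rw [show y = -(-y) by ring, psi_neg, psi_nonneg_val hp (by linarith)]
        ring_nf
      have hM1 : x ≤ max |x| |y| := le_max_of_le_left (le_abs_self x)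
      have hM2 : -y ≤ max |x| |y| := le_max_of_le_right (neg_le_abs y)
      have hM0 : (0:ℝ) ≤ max |x| |y| := le_trans hx hM1
      have hx1 : x ^ (p-1) ≤ (max |x| |y|) ^ (p-2) * x := by
        have h1 : x ^ (p-1) = x ^ (p-2) * x := by
          rcases hx.eq_or_lt with h0 | h0
          · rw [← h0]; simp [Real.zero_rpow (by linarith : p - (1:ℝ) ≠ 0)]
          · rw [← Real.rpow_add_one h0.ne']; ring_nf
        rw [h1]
        exact mul_le_mul_of_nonneg_right (Real.rpow_le_rpow hx hM1 (by linarith)) hx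
      have hy1 : (-y) ^ (p-1) ≤ (max |x| |y|) ^ (p-2) * (-y) := by
        have h1 : (-y) ^ (p-1) = (-y) ^ (p-2) * (-y) := by
          rw [← Real.rpow_add_one (by linarith : (-y) ≠ 0)]; ring_nf
        rw [h1]
        exact mul_le_mul_of_nonneg_right
          (Real.rpow_le_rpow (by linarith) hM2 (by linarith)) (by linarith)
      have hnn : 0 ≤ (max |x| |y|) ^ (p-2) * (x-y) :=
        mul_nonneg (Real.rpow_nonneg hM0 _) (by linarith)
      rw [hpx, hpy]
      nlinarith [hx1, hy1, hnn]
    · -- y ≤ x < 0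
      have h1 : psi p x - psi p y = psi p (-y) - psi p (-x) := by
        rw [psi_neg, psi_neg]; ring
      rw [h1, psi_nonneg_val hp (by linarith), psi_nonneg_val hp (by linarith)]
      have hM : max |x| |y| = -y := by
        rw [abs_of_neg hx, abs_of_neg (by linarith : y < 0)]
        exact max_eq_right (by linarith)
      rw [hM]
      have := grad_ineq (by linarith : (1:ℝ) ≤ p - 1) (by linarith : (0:ℝ) ≤ -x)
        (by linarith : -x ≤ -y)
      calc (-y) ^ (p-1) - (-x) ^ (p-1) ≤ (p-1) * (-y) ^ (p-1-1) * (-y - -x) := this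
        _ = (p-1) * (x-y) * (-y) ^ (p-2) := by rw [show p-1-1 = p-2 by ring]; ring

/-- comparison of functions via derivatives -/
lemma le_of_deriv_le {f g f' g' : ℝ → ℝ} {s t : ℝ} (hst : s ≤ t)
    (hf : ∀ z, HasDerivAt f (f' z) z) (hg : ∀ z, HasDerivAt g (g' z) z)
    (h0 : f s ≤ g s) (hle : ∀ z ∈ Set.Ioo s t, f' z ≤ g' z) : f t ≤ g t := by
  have h : MonotoneOn (fun z => g z - f z) (Set.Icc s t) := by
    apply monotoneOn_of_deriv_nonneg (convex_Icc s t)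
    · exact fun z _ => ((hg z).sub (hf z)).continuousAt.continuousWithinAt
    · intro z _
      exact ((hg z).sub (hf z)).differentiableAt.differentiableWithinAt
    · intro z hz
      rw [interior_Icc] at hz
      have hd : deriv (fun z => g z - f z) z = g' z - f' z := ((hg z).sub (hf z)).deriv
      rw [hd]
      exact sub_nonneg.2 (hle z hz)
  have h2 := h (Set.left_mem_Icc.2 hst) (Set.right_mem_Icc.2 hst) hst
  simp only at h2
  linarith

/-- trapezoid Lipschitz bound for psi, p ≥ 4 -/
lemma psi_lip_trap {p x y : ℝ} (hp4 : 4 ≤ p) (hxy : y ≤ x) :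
    psi p x - psi p y ≤ (p-1)/2 * (x - y) * (|x| ^ (p-2) + |y| ^ (p-2)) := by
  have hp : (2:ℝ) ≤ p := by linarith
  have hp1 : (1:ℝ) ≤ p - 1 := by linarith
  have key : ∀ u v : ℝ, 0 ≤ u → u ≤ v →
      v ^ (p-1) - u ^ (p-1) ≤ (p-1)/2 * (v - u) * (v ^ (p-2) + u ^ (p-2)) := by
    intro u v hu huv
    set F : ℝ → ℝ := fun z => z ^ (p-1)
    set G : ℝ → ℝ := fun z => (p-1)/2 * ((z - u) * (z ^ (p-2) + u ^ (p-2))) + u ^ (p-1)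
    have hF : ∀ z, HasDerivAt F ((p-1) * z ^ (p-2)) z := by
      intro z
      have := Real.hasDerivAt_rpow_const (x := z) (p := p-1) (Or.inr hp1)
      simpa [show p-1-1 = p-2 by ring] using this
    have hG : ∀ z, HasDerivAt G
        ((p-1)/2 * (1 * (z ^ (p-2) + u ^ (p-2)) + (z - u) * ((p-2) * z ^ (p-3)))) z := by
      intro z
      have h1 : HasDerivAt (fun z : ℝ => z - u) 1 z := (hasDerivAt_id z).sub_const u
      have h2 : HasDerivAt (fun z : ℝ => z ^ (p-2) + u ^ (p-2)) ((p-2) * z ^ (p-3)) z := by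
        have := Real.hasDerivAt_rpow_const (x := z) (p := p-2) (Or.inr (by linarith))
        simpa [show p-2-1 = p-3 by ring] using this.add_const (u ^ (p-2))
      exact ((h1.mul h2).const_mul _).add_const _
    have h0 : F u ≤ G u := by simp [F, G]
    have hle : ∀ z ∈ Set.Ioo u v,
        (p-1) * z ^ (p-2) ≤ (p-1)/2 * (1 * (z ^ (p-2) + u ^ (p-2)) + (z - u) * ((p-2) * z ^ (p-3))) := by
      intro z hz
      have hz0 : 0 ≤ z := le_trans hu hz.1.le
      have := grad_ineq (q := p-2) (by linarith) hu hz.1.le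
      rw [show p-2-1 = p-3 by ring] at this
      nlinarith [this]
    have := le_of_deriv_le huv hF hG h0 hle
    simp only [F, G] at this
    linarith [this]
  rcases le_or_gt 0 y with hy | hy
  · have hx : 0 ≤ x := hy.trans hxy
    rw [psi_nonneg_val hp hx, psi_nonneg_val hp hy, abs_of_nonneg hx, abs_of_nonneg hy]
    have := key y x hy hxy
    linarith
  rcases le_or_gt 0 x with hx | hx
  · -- y < 0 ≤ x
    have hpx : psi p x = x ^ (p-1) := psi_nonneg_val hp hx
    have hpy : psi p y = - (-y) ^ (p-1) := by
      rw [show y = -(-y) by ring, psi_neg, psi_nonneg_val hp (by linarith)]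
      ring_nf
    rw [hpx, hpy, abs_of_nonneg hx, abs_of_neg hy]
    have hx1 : x ^ (p-1) = x ^ (p-2) * x := by
      rcases hx.eq_or_lt with h0 | h0
      · rw [← h0]; simp [Real.zero_rpow (by linarith : p - (1:ℝ) ≠ 0),
          Real.zero_rpow (by linarith : p - (2:ℝ) ≠ 0)]
      · rw [← Real.rpow_add_one h0.ne']; ring_nf
    have hy1 : (-y) ^ (p-1) = (-y) ^ (p-2) * (-y) := by
      rw [← Real.rpow_add_one (by linarith : (-y) ≠ 0)]; ring_nf
    have hxNN : 0 ≤ x ^ (p-2) := Real.rpow_nonneg hx _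
    have hyNN : 0 ≤ (-y) ^ (p-2) := Real.rpow_nonneg (by linarith) _
    have e1 : x ^ (p-2) * x ≤ x ^ (p-2) * (x-y) :=
      mul_le_mul_of_nonneg_left (by linarith) hxNN
    have e2 : (-y) ^ (p-2) * (-y) ≤ (-y) ^ (p-2) * (x-y) :=
      mul_le_mul_of_nonneg_left (by linarith) hyNN
    have e3 : 0 ≤ (x - y) * (x ^ (p-2) + (-y) ^ (p-2)) :=
      mul_nonneg (by linarith) (by linarith)
    nlinarith [hx1, hy1, e1, e2, e3]
  · -- y ≤ x < 0
    have h1 : psi p x - psi p y = psi p (-y) - psi p (-x) := by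
      rw [psi_neg, psi_neg]; ring
    rw [h1, psi_nonneg_val hp (by linarith), psi_nonneg_val hp (by linarith),
      abs_of_neg hx, abs_of_neg (by linarith : y < 0)]
    have := key (-x) (-y) (by linarith) (by linarith)
    linarith

lemma hasDerivAt_abs_rpow {p : ℝ} (hp : 2 ≤ p) (a b t : ℝ) :
    HasDerivAt (fun t => |a + t*b| ^ p) (p * psi p (a + t*b) * b) t := by
  have h1 : HasDerivAt (fun t : ℝ => a + t*b) b t := by
    simpa using (hasDerivAt_mul_const b).const_add a
  have h2 := (hasDerivAt_pow 2 (a + t*b)).comp t h1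
  have h3 : HasDerivAt (fun w : ℝ => w ^ (p/2))
      ((p/2) * ((a+t*b)^2) ^ (p/2 - 1)) ((a+t*b)^2) :=
    Real.hasDerivAt_rpow_const (Or.inr (by linarith))
  have h4 := h3.comp t h2
  have hfun : ((fun w : ℝ => w ^ (p/2)) ∘ (fun x : ℝ => x ^ 2) ∘ fun t : ℝ => a + t*b)
      = fun t => |a + t*b| ^ p := by
    funext s
    show (((a + s*b)^2 : ℝ)) ^ (p/2) = _
    rw [rpow_sq_abs, show 2 * (p/2) = p by ring]
  rw [hfun] at h4
  refine (h4.congr_deriv ?_ : HasDerivAt (fun t => |a + t*b| ^ p) _ t)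
  have : ((a+t*b)^2) ^ (p/2 - 1) = |a+t*b| ^ (p-2) := by
    rw [rpow_sq_abs, show 2 * (p/2 - 1) = p - 2 by ring]
  rw [this, psi]
  push_cast
  ring

lemma key_nonneg {p a b : ℝ} (hp : 2 ≤ p) (ha : 0 ≤ a) (hb : 0 ≤ b) :
    |a+b|^p + |a-b|^p - 2*a^p ≤ 2*p^2 * a^(p-2) * b^2 + p^(p+1)*(p-1) * b^p := by
  have hp0 : (0:ℝ) < p := by linarith
  have hp1 : (0:ℝ) < p - 1 := by linarith
  rcases hb.eq_or_lt with hb0 | hb0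
  · rw [← hb0]
    have h1 : (0:ℝ)^p = 0 := Real.zero_rpow hp0.ne'
    have h2 : |a + 0| = a := by rw [add_zero, abs_of_nonneg ha]
    have h3 : |a - 0| = a := by rw [sub_zero, abs_of_nonneg ha]
    rw [h2, h3, h1]
    have : (0:ℝ) ≤ 2*p^2 * a^(p-2) * 0^2 + p^(p+1)*(p-1) * 0 := by
      positivity
    linarith [this]
  -- setup
  set F : ℝ → ℝ := fun t => |a + t*b|^p + |a + t*(-b)|^p with hFdef
  have hF : ∀ t, HasDerivAt F
      (p * psi p (a+t*b) * b + p * psi p (a+t*(-b)) * (-b)) t :=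
    fun t => (hasDerivAt_abs_rpow hp a b t).add (hasDerivAt_abs_rpow hp a (-b) t)
  have hF0 : F 0 = 2 * a^p := by
    simp only [hFdef, zero_mul, add_zero, abs_of_nonneg ha]
    ring
  have hF1 : F 1 = |a+b|^p + |a-b|^p := by
    simp only [hFdef, one_mul, mul_neg, ← sub_eq_add_neg]
  have habs : ∀ t : ℝ, 0 ≤ t → |a + t * (-b)| ≤ a + t*b := by
    intro t ht
    have htb : 0 ≤ t * b := mul_nonneg ht hb
    rw [abs_le]
    constructor <;> nlinarith
  rcases le_or_gt p 4 with hple | hpgt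
  · -- Branch I : 2 ≤ p ≤ 4
    set C : ℝ := p*(p-1)*(a+b)^(p-2)*b^2 with hCdef
    set W : ℝ → ℝ := fun t => 2*a^p + C * t^2 with hWdef
    have hW : ∀ t, HasDerivAt W (C * (2*t)) t := by
      intro t
      have := ((hasDerivAt_pow 2 t).const_mul C).const_add (2*a^p)
      refine (this.congr_deriv ?_ : HasDerivAt W _ t)
      norm_num
    have hcomp : ∀ t ∈ Set.Ioo (0:ℝ) 1,
        p * psi p (a+t*b) * b + p * psi p (a+t*(-b)) * (-b) ≤ C * (2*t) := by
      intro t ht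
      have ht0 : 0 < t := ht.1
      have ht1 : t < 1 := ht.2
      have htb : 0 ≤ t * b := by positivity
      have hxy : a + t*(-b) ≤ a + t*b := by nlinarith
      have hlip := psi_lip_max hp hxy
      have hdiff : (a + t*b) - (a + t*(-b)) = 2*(t*b) := by ring
      have hmax : max |a+t*b| |a+t*(-b)| = a + t*b := by
        rw [abs_of_nonneg (by linarith : (0:ℝ) ≤ a + t*b)]
        exact max_eq_left (habs t ht0.le)
      rw [hdiff, hmax] at hlip
      have hbase : (a+t*b)^(p-2) ≤ (a+b)^(p-2) := by
        apply Real.rpow_le_rpow (by linarith) _ (by linarith)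
        nlinarith
      have hpb : (0:ℝ) ≤ p * b := by positivity
      have step1 : p * b * (psi p (a+t*b) - psi p (a+t*(-b)))
          ≤ p * b * ((p-1) * (2*(t*b)) * (a+t*b)^(p-2)) := by
        apply mul_le_mul_of_nonneg_left _ hpb
        exact hlip
      have step2 : p * b * ((p-1) * (2*(t*b)) * (a+t*b)^(p-2))
          ≤ p * b * ((p-1) * (2*(t*b)) * (a+b)^(p-2)) := by
        apply mul_le_mul_of_nonneg_left _ hpb
        apply mul_le_mul_of_nonneg_left hbase
        positivity
      calc p * psi p (a+t*b) * b + p * psi p (a+t*(-b)) * (-b)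
          = p * b * (psi p (a+t*b) - psi p (a+t*(-b))) := by ring
        _ ≤ p * b * ((p-1) * (2*(t*b)) * (a+b)^(p-2)) := le_trans step1 step2
        _ = C * (2*t) := by rw [hCdef]; ring
    have hcmp : F 1 ≤ W 1 := by
      apply le_of_deriv_le zero_le_one hF hW _ hcomp
      rw [hF0]; simp [hWdef]
    have hW1 : W 1 = 2*a^p + C := by simp [hWdef]
    rw [hF1] at hcmp
    rw [hW1] at hcmp
    -- now |a+b|^p + |a-b|^p ≤ 2a^p + C
    by_cases hc : b*(p-2) ≤ a * Real.log 2
    · have h2 : (a+b)^(p-2) ≤ 2 * a^(p-2) := by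
        rcases hp.eq_or_lt with heq | hlt2
        · rw [← heq]
          norm_num
        · rcases ha.eq_or_lt with ha0 | ha0
          · exfalso
            have : (0:ℝ) < b * (p - 2) := by nlinarith
            rw [← ha0] at hc
            simp at hc
            nlinarith
          · have hcalc : a + b = a * (1 + b/a) := by field_simp
            rw [hcalc, Real.mul_rpow ha0.le (by positivity)]
            have hexp1 := one_add_rpow_le_exp (div_nonneg hb0.le ha0.le)
              (by linarith : (0:ℝ) ≤ p - 2)
            have harg : b/a*(p-2) ≤ Real.log 2 := by
              rw [div_mul_eq_mul_div, div_le_iff₀ ha0]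
              nlinarith
            have hexp2 : Real.exp (b/a*(p-2)) ≤ 2 := by
              calc Real.exp (b/a*(p-2)) ≤ Real.exp (Real.log 2) :=
                    Real.exp_le_exp.2 harg
                _ = 2 := Real.exp_log two_pos
            calc a^(p-2) * (1+b/a)^(p-2) ≤ a^(p-2) * 2 := by
                  apply mul_le_mul_of_nonneg_left (le_trans hexp1 hexp2)
                    (Real.rpow_nonneg ha0.le _)
              _ = 2 * a^(p-2) := by ring
      have hCle : C ≤ 2*p^2 * a^(p-2) * b^2 := by
        have hnn : (0:ℝ) ≤ a^(p-2) := Real.rpow_nonneg ha _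
        calc C = p*(p-1)*(a+b)^(p-2)*b^2 := hCdef
          _ ≤ p*p*(2*a^(p-2))*b^2 := by
              gcongr
              all_goals first | exact h2 | linarith
          _ = 2*p^2*a^(p-2)*b^2 := by ring
      have hBnn : (0:ℝ) ≤ p^(p+1)*(p-1) * b^p := by positivity
      linarith
    · push_neg at hc
      have hp2 : 2 < p := by
        rcases hp.eq_or_lt with heq | hlt2
        · exfalso
          rw [← heq] at hc
          have : (0:ℝ) ≤ a * Real.log 2 :=
            mul_nonneg ha (Real.log_nonneg one_le_two)
          nlinarith
        · exact hlt2
      have hab3 : a ≤ 3*b := by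
        have hl2 : (0.6931471803:ℝ) < Real.log 2 := Real.log_two_gt_d9
        nlinarith
      have h44 : (4:ℝ)^(p-2) ≤ p^p := by
        have e1 : (4:ℝ)^(p-2) = (2:ℝ)^(2*(p-2)) := by
          rw [show (4:ℝ) = (2:ℝ)^(2:ℕ) by norm_num, ← Real.rpow_natCast (2:ℝ) 2,
            ← Real.rpow_mul (by norm_num : (0:ℝ) ≤ 2)]
          norm_num
        rw [e1]
        calc (2:ℝ)^(2*(p-2)) ≤ (2:ℝ)^p :=
              Real.rpow_le_rpow_of_exponent_le one_le_two (by linarith)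
          _ ≤ p^p := Real.rpow_le_rpow (by norm_num) hp (by linarith)
      have hCle : C ≤ p^(p+1)*(p-1) * b^p := by
        rw [hCdef]
        have e2 : (a+b)^(p-2) ≤ (4*b)^(p-2) :=
          Real.rpow_le_rpow (by linarith) (by linarith) (by linarith)
        have e3 : (4*b)^(p-2) = 4^(p-2) * b^(p-2) :=
          Real.mul_rpow (by norm_num) hb0.le
        have e4 : b^(p-2) * b^2 = b^p := by
          rw [← Real.rpow_natCast b 2, ← Real.rpow_add hb0]
          norm_num
        have e5 : p^p * p = p^(p+1) := (Real.rpow_add_one hp0.ne' p).symm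
        have hb2 : (0:ℝ) ≤ b^(p-2) := Real.rpow_nonneg hb0.le _
        have hbp : (0:ℝ) ≤ b^p := Real.rpow_nonneg hb0.le _
        have hpp : (0:ℝ) ≤ p^p := Real.rpow_nonneg hp0.le _
        have hAB : (a+b)^(p-2) ≤ p^p * b^(p-2) := by
          calc (a+b)^(p-2) ≤ (4*b)^(p-2) := e2
            _ = 4^(p-2) * b^(p-2) := e3
            _ ≤ p^p * b^(p-2) := mul_le_mul_of_nonneg_right h44 hb2
        calc p*(p-1)*(a+b)^(p-2)*b^2 ≤ p*(p-1)*(p^p * b^(p-2))*b^2 := by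
              gcongr
              all_goals first | exact hAB | linarith
          _ = p*(p-1)*p^p*(b^(p-2)*b^2) := by ring
          _ = p*(p-1)*p^p*b^p := by rw [e4]
          _ = p^(p+1)*(p-1)*b^p := by rw [← e5]; ring
      have hAnn : (0:ℝ) ≤ 2*p^2 * a^(p-2) * b^2 := by positivity
      linarith
  · -- Branch II : p > 4
    have hp4 : (4:ℝ) ≤ p := hpgt.le
    set A : ℝ := 2*p^2 * a^(p-2) * b^2 with hAdef
    set B : ℝ := p^(p+1)*(p-1) * b^p with hBdef
    have hAnn : (0:ℝ) ≤ A := by rw [hAdef]; positivity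
    have hBnn : (0:ℝ) ≤ B := by rw [hBdef]; positivity
    set W : ℝ → ℝ := fun t => 2*a^p + A * t^2 + B * t^p with hWdef
    have hW : ∀ t, HasDerivAt W (A * (2*t) + B * (p * t^(p-1))) t := by
      intro t
      have h1 := ((hasDerivAt_pow 2 t).const_mul A).const_add (2*a^p)
      have h2 := (Real.hasDerivAt_rpow_const (x := t) (p := p)
        (Or.inr (by linarith))).const_mul B
      have := h1.add h2
      refine (this.congr_deriv ?_ : HasDerivAt W _ t)
      norm_num
    have hcomp : ∀ t ∈ Set.Ioo (0:ℝ) 1,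
        p * psi p (a+t*b) * b + p * psi p (a+t*(-b)) * (-b)
          ≤ A * (2*t) + B * (p * t^(p-1)) := by
      intro t ht
      have ht0 : 0 < t := ht.1
      have ht1 : t < 1 := ht.2
      set u : ℝ := t*b with hudef
      have hu0 : 0 < u := by positivity
      have hxy : a + t*(-b) ≤ a + t*b := by nlinarith
      have hlip := psi_lip_trap hp4 hxy
      have hdiff : (a + t*b) - (a + t*(-b)) = 2*u := by rw [hudef]; ring
      have habs1 : |a + t*b| = a + u := by
        rw [hudef, abs_of_nonneg (by nlinarith : (0:ℝ) ≤ a + t*b)]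
      have habs2 : |a + t*(-b)| = |a - u| := by
        rw [hudef]; congr 1; ring
      rw [hdiff, habs1, habs2] at hlip
      -- core claim
      have CL : p*(p-1)*((a+u)^(p-2) + |a-u|^(p-2))
          ≤ 4*p^2*a^(p-2) + p^(p+2)*(p-1)*u^(p-2) := by
        by_cases hcc : u*(p-2) ≤ a * Real.log 3
        · have hlog3 : Real.log 3 ≤ 2 := by
            have := Real.log_le_sub_one_of_pos (by norm_num : (0:ℝ) < 3)
            linarith
          have hua : u ≤ a := by nlinarith
          have h3 : (a+u)^(p-2) ≤ 3 * a^(p-2) := by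
            have ha0 : 0 < a := lt_of_lt_of_le hu0 hua
            have hcalc : a + u = a * (1 + u/a) := by field_simp
            rw [hcalc, Real.mul_rpow ha0.le (by positivity)]
            have hexp1 := one_add_rpow_le_exp (div_nonneg hu0.le ha0.le)
              (by linarith : (0:ℝ) ≤ p - 2)
            have harg : u/a*(p-2) ≤ Real.log 3 := by
              rw [div_mul_eq_mul_div, div_le_iff₀ ha0]
              nlinarith
            have hexp2 : Real.exp (u/a*(p-2)) ≤ 3 := by
              calc Real.exp (u/a*(p-2)) ≤ Real.exp (Real.log 3) :=
                    Real.exp_le_exp.2 harg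
                _ = 3 := Real.exp_log (by norm_num)
            calc a^(p-2) * (1+u/a)^(p-2) ≤ a^(p-2) * 3 := by
                  apply mul_le_mul_of_nonneg_left (le_trans hexp1 hexp2)
                    (Real.rpow_nonneg ha0.le _)
              _ = 3 * a^(p-2) := by ring
          have h4 : |a-u|^(p-2) ≤ a^(p-2) := by
            rw [abs_of_nonneg (by linarith : (0:ℝ) ≤ a - u)]
            exact Real.rpow_le_rpow (by linarith) (by linarith) (by linarith)
          have hun : (0:ℝ) ≤ u^(p-2) := Real.rpow_nonneg hu0.le _
          have han : (0:ℝ) ≤ a^(p-2) := Real.rpow_nonneg ha _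
          have hpn : (0:ℝ) ≤ p^(p+2) := Real.rpow_nonneg hp0.le _
          have c1 : p*(p-1)*((a+u)^(p-2) + |a-u|^(p-2)) ≤ p*(p-1)*(4*a^(p-2)) :=
            mul_le_mul_of_nonneg_left (by linarith) (by positivity)
          have c2 : p*(p-1)*(4*a^(p-2)) ≤ 4*p^2*a^(p-2) := by
            nlinarith [mul_nonneg han hp0.le]
          have c3 : (0:ℝ) ≤ p^(p+2)*(p-1)*u^(p-2) := by positivity
          linarith
        · push_neg at hcc
          have hlog3 : 1 ≤ Real.log 3 := by
            rw [Real.le_log_iff_exp_le (by norm_num : (0:ℝ) < 3)]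
            calc Real.exp 1 ≤ 2.7182818286 := Real.exp_one_lt_d9.le
              _ ≤ 3 := by norm_num
          have hau : a ≤ u * (p-2) := by nlinarith
          have h5 : a + u ≤ u*p := by nlinarith
          have h6 : |a-u| ≤ u*p := by
            rw [abs_le]; constructor <;> nlinarith
          have h7 : (a+u)^(p-2) ≤ (u*p)^(p-2) :=
            Real.rpow_le_rpow (by linarith) h5 (by linarith)
          have h8 : |a-u|^(p-2) ≤ (u*p)^(p-2) :=
            Real.rpow_le_rpow (abs_nonneg _) h6 (by linarith)
          have h9 : (u*p)^(p-2) = u^(p-2) * p^(p-2) :=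
            Real.mul_rpow hu0.le hp0.le
          have h10 : p^(p-2) * p^(4:ℕ) = p^(p+2) := by
            rw [← Real.rpow_natCast p 4, ← Real.rpow_add hp0]
            congr 1
            ring
          have hun : (0:ℝ) ≤ u^(p-2) := Real.rpow_nonneg hu0.le _
          have hpn2 : (0:ℝ) ≤ p^(p-2) := Real.rpow_nonneg hp0.le _
          have han : (0:ℝ) ≤ a^(p-2) := Real.rpow_nonneg ha _
          -- p(p-1)·2·u^{p-2}p^{p-2} ≤ (p-1)·u^{p-2}·p^{p-2}·p^4 since 2p ≤ p^4
          have hfin : p*(p-1)*(2*(u^(p-2)*p^(p-2))) ≤ p^(p+2)*(p-1)*u^(p-2) := by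
            rw [← h10]
            have h2p : 2*p ≤ p^(4:ℕ) := by nlinarith [mul_pos hp0 hp0, mul_pos (mul_pos hp0 hp0) hp0, hp]
            have hnn : (0:ℝ) ≤ (p-1) * (u^(p-2)*p^(p-2)) := by positivity
            nlinarith [mul_le_mul_of_nonneg_right h2p hnn]
          have c1 : p*(p-1)*((a+u)^(p-2) + |a-u|^(p-2)) ≤ p*(p-1)*(2*(u^(p-2)*p^(p-2))) := by
            apply mul_le_mul_of_nonneg_left _ (by positivity)
            rw [← h9]
            linarith
          have c2 : (0:ℝ) ≤ 4*p^2*a^(p-2) := by positivity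
          linarith
      -- multiply CL by t*b^2 and assemble
      have htb2 : (0:ℝ) < t*b^2 := by positivity
      have hmul := mul_le_mul_of_nonneg_right CL htb2.le
      have hrw1 : (4*p^2*a^(p-2) + p^(p+2)*(p-1)*u^(p-2)) * (t*b^2)
          = A*(2*t) + B*(p*t^(p-1)) := by
        rw [hAdef, hBdef, hudef]
        have e1 : (t*b)^(p-2) = t^(p-2) * b^(p-2) := Real.mul_rpow ht0.le hb0.le
        have e2 : t^(p-2) * t = t^(p-1) := by
          rw [← Real.rpow_add_one ht0.ne']; ring_nf
        have e3 : b^(p-2) * b^2 = b^p := by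
          rw [← Real.rpow_natCast b 2, ← Real.rpow_add hb0]; norm_num
        have e4 : p^(p+1) * p = p^(p+2) := by
          rw [← Real.rpow_add_one hp0.ne']; ring_nf
        calc (4*p^2*a^(p-2) + p^(p+2)*(p-1)*(t*b)^(p-2)) * (t*b^2)
            = 4*p^2*a^(p-2)*b^2*t + p^(p+2)*(p-1)*((t^(p-2)*t) * (b^(p-2)*b^2)) := by
              rw [e1]; ring
          _ = 4*p^2*a^(p-2)*b^2*t + (p^(p+1)*p)*(p-1)*(t^(p-1) * b^p) := by
              rw [e2, e3, e4]
          _ = 2*p^2*a^(p-2)*b^2 * (2*t) + p^(p+1)*(p-1)*b^p * (p*t^(p-1)) := by ring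
      rw [hrw1] at hmul
      calc p * psi p (a+t*b) * b + p * psi p (a+t*(-b)) * (-b)
          = p * b * (psi p (a+t*b) - psi p (a+t*(-b))) := by ring
        _ ≤ p * b * ((p-1)/2 * (2*u) * ((a+u)^(p-2) + |a-u|^(p-2))) := by
            apply mul_le_mul_of_nonneg_left hlip (by positivity)
        _ = p*(p-1)*((a+u)^(p-2) + |a-u|^(p-2)) * (t*b^2) := by
            rw [hudef]; ring
        _ ≤ A*(2*t) + B*(p*t^(p-1)) := hmul
    have hcmp : F 1 ≤ W 1 := by
      apply le_of_deriv_le zero_le_one hF hW _ hcomp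
      rw [hF0]
      simp [hWdef, Real.zero_rpow hp0.ne']
    have hW1 : W 1 = 2*a^p + A + B := by
      simp [hWdef, Real.one_rpow]
    rw [hF1] at hcmp
    rw [hW1] at hcmp
    linarith


lemma pair_abs {p a b : ℝ} :
    |a+b|^p + |a-b|^p = |(|a|)+(|b|)|^p + |(|a|)-(|b|)|^p := by
  rcases le_or_gt 0 a with ha | ha <;> rcases le_or_gt 0 b with hb | hb
  · rw [abs_of_nonneg ha, abs_of_nonneg hb]
  · rw [abs_of_nonneg ha, abs_of_neg hb,
      show a + -b = a - b by ring, show a - -b = a + b by ring, add_comm]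
  · rw [abs_of_neg ha, abs_of_nonneg hb,
      show -a + b = -(a - b) by ring, show -a - b = -(a + b) by ring,
      abs_neg, abs_neg, add_comm]
  · rw [abs_of_neg ha, abs_of_neg hb,
      show -a + -b = -(a + b) by ring, show -a - -b = -(a - b) by ring,
      abs_neg, abs_neg]

lemma key {p : ℝ} (hp : 2 ≤ p) (a b : ℝ) :
    |a+b|^p + |a-b|^p - 2*|a|^p
      ≤ 2*p^2 * |a|^(p-2) * b^2 + p^(p+1)*(p-1) * |b|^p := by
  have H := key_nonneg hp (abs_nonneg a) (abs_nonneg b)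
  rw [← pair_abs] at H
  rw [← sq_abs b]
  exact H

lemma key_div {p : ℝ} (hp : 2 ≤ p) (a b : ℝ) :
    (|a+b|^p + |a-b|^p - 2*|a|^p) / (p*(p-1))
      ≤ 2*p/(p-1) * (|a|^(p-2) * b^2) + p^p * |b|^p := by
  have hp0 : (0:ℝ) < p := by linarith
  have hp1 : (0:ℝ) < p - 1 := by linarith
  have hc : (0:ℝ) < p*(p-1) := by positivity
  have h := key hp a b
  have hpp1 : p^(p+1) = p^p * p := Real.rpow_add_one hp0.ne' p
  rw [hpp1] at h
  rw [div_le_iff₀ hc]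
  have e : (2*p/(p-1) * (|a|^(p-2) * b^2) + p^p * |b|^p) * (p*(p-1))
      = 2*p^2*|a|^(p-2)*b^2 + p^p*p*(p-1)*|b|^p := by
    field_simp
  rw [e]
  linarith


/-- dominating bound used for products -/
lemma rpow_mul_le {p x y z : ℝ} (hp : 2 ≤ p) :
    |x|^(p-2) * |y| * |z| ≤ |x|^p + |y|^p + |z|^p := by
  set m : ℝ := max |x| (max |y| |z|) with hm
  have hm0 : 0 ≤ m := le_trans (abs_nonneg x) (le_max_left _ _)
  have h1 : |x| ≤ m := le_max_left _ _
  have h2 : |y| ≤ m := le_trans (le_max_left _ _) (le_max_right _ _)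
  have h3 : |z| ≤ m := le_trans (le_max_right _ _) (le_max_right _ _)
  have step1 : |x|^(p-2) * |y| * |z| ≤ m^(p-2) * m * m := by
    have e1 : |x|^(p-2) ≤ m^(p-2) := Real.rpow_le_rpow (abs_nonneg _) h1 (by linarith)
    have := mul_le_mul e1 h2 (abs_nonneg y) (Real.rpow_nonneg hm0 _)
    exact mul_le_mul this h3 (abs_nonneg z) (mul_nonneg (Real.rpow_nonneg hm0 _) hm0)
  have step2 : m^(p-2) * m * m = m^p := by
    rcases hm0.eq_or_lt with h0 | h0
    · rw [← h0]
      simp [Real.zero_rpow (by linarith : p ≠ 0)]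
    · rw [← Real.rpow_add_one h0.ne', ← Real.rpow_add_one h0.ne']
      congr 1
      ring
  have step3 : m^p ≤ |x|^p + |y|^p + |z|^p := by
    have nx : 0 ≤ |x|^p := Real.rpow_nonneg (abs_nonneg _) _
    have ny : 0 ≤ |y|^p := Real.rpow_nonneg (abs_nonneg _) _
    have nz : 0 ≤ |z|^p := Real.rpow_nonneg (abs_nonneg _) _
    rcases max_cases |x| (max |y| |z|) with ⟨e,_⟩ | ⟨e,_⟩
    · rw [hm, e]; linarith
    · rw [hm, e]
      rcases max_cases |y| |z| with ⟨e2,_⟩ | ⟨e2,_⟩ <;> rw [e2] <;> linarith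
  linarith [step1, step2 ▸ step1, step3]

lemma abs_add_rpow_le {p x y : ℝ} (hp : 0 ≤ p) :
    |x + y| ^ p ≤ 2^p * (|x|^p + |y|^p) := by
  have h1 : |x+y| ≤ 2 * max |x| |y| := by
    calc |x+y| ≤ |x| + |y| := abs_add_le x y
      _ ≤ 2 * max |x| |y| := by
          have := le_max_left |x| |y|; have := le_max_right |x| |y|; linarith
  have hmn : (0:ℝ) ≤ max |x| |y| := le_trans (abs_nonneg x) (le_max_left _ _)
  have h2 : |x+y|^p ≤ (2 * max |x| |y|)^p :=
    Real.rpow_le_rpow (abs_nonneg _) h1 hp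
  have h3 : (2*max |x| |y|)^p = 2^p * (max |x| |y|)^p :=
    Real.mul_rpow (by norm_num) hmn
  have h4 : (max |x| |y|)^p ≤ |x|^p + |y|^p := by
    have nx : 0 ≤ |x|^p := Real.rpow_nonneg (abs_nonneg _) _
    have ny : 0 ≤ |y|^p := Real.rpow_nonneg (abs_nonneg _) _
    rcases max_cases |x| |y| with ⟨e,_⟩ | ⟨e,_⟩ <;> rw [e] <;> linarith
  calc |x+y|^p ≤ 2^p * (max |x| |y|)^p := by rw [← h3]; exact h2
    _ ≤ 2^p * (|x|^p + |y|^p) := by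
        apply mul_le_mul_of_nonneg_left h4 (Real.rpow_nonneg (by norm_num) _)

variable {Ω : Type*} [MeasurableSpace Ω] {P : Measure Ω}

lemma integrable_abs_rpow_add {p : ℝ} (hp : 0 ≤ p) {f g : Ω → ℝ}
    (hfm : Measurable f) (hgm : Measurable g)
    (hf : Integrable (fun ω => |f ω|^p) P) (hg : Integrable (fun ω => |g ω|^p) P) :
    Integrable (fun ω => |f ω + g ω|^p) P := by
  apply Integrable.mono' (((hf.add hg).const_mul (2^p)))
  · exact ((Real.continuous_rpow_const hp).measurable.comp
      (hfm.add hgm).abs).aestronglyMeasurable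
  · filter_upwards with ω
    rw [Real.norm_eq_abs, abs_of_nonneg (Real.rpow_nonneg (abs_nonneg _) _)]
    exact abs_add_rpow_le hp

lemma integrable_abs_rpow_sub {p : ℝ} (hp : 0 ≤ p) {f g : Ω → ℝ}
    (hfm : Measurable f) (hgm : Measurable g)
    (hf : Integrable (fun ω => |f ω|^p) P) (hg : Integrable (fun ω => |g ω|^p) P) :
    Integrable (fun ω => |f ω - g ω|^p) P := by
  have := integrable_abs_rpow_add hp hfm hgm.neg hf (by simpa [abs_neg] using hg)
  simpa [sub_eq_add_neg] using this

end ERUB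

open ERUB

/-- upper bound on the excess risk for `p ∈ [2, ∞)`
(inequality `eq:upperboundpgeq2` of Lemma `lem:boundsgeq2`). -/
theorem excess_risk_upper_bound_p_ge_two
    {Ω : Type*} [MeasurableSpace Ω] (P : Measure Ω) [IsProbabilityMeasure P]
    {d : ℕ} (X : Ω → Fin d → ℝ) (Y : Ω → ℝ) (hX : Measurable X) (hY : Measurable Y)
    (p : ℝ) (hp : 2 ≤ p)
    (hYp : Integrable (fun ω => |Y ω| ^ p) P)
    (hXp : ∀ j : Fin d, Integrable (fun ω => |X ω j| ^ p) P)
    (Rp : (Fin d → ℝ) → ℝ)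
    (hRp : Rp = fun w => ∫ ω, |∑ j, w j * X ω j - Y ω| ^ p / (p * (p - 1)) ∂P)
    (wstar : Fin d → ℝ) (hstar : ∀ w, Rp wstar ≤ Rp w)
    (Hp : Matrix (Fin d) (Fin d) ℝ)
    (hHp : Hp = Matrix.of fun i j =>
      ∫ ω, |∑ j', wstar j' * X ω j' - Y ω| ^ (p - 2) * (X ω i * X ω j) ∂P)
    (w : Fin d → ℝ) :
    Rp w - Rp wstar ≤
      (2 * p / (p - 1)) * ((w - wstar) ⬝ᵥ (Hp *ᵥ (w - wstar))) +
        p ^ p * ∫ ω, |∑ j, (w j - wstar j) * X ω j| ^ p ∂P := by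
  have hp0 : (0:ℝ) < p := by linarith
  have hp1 : (0:ℝ) < p - 1 := by linarith
  have hc0 : (0:ℝ) < p * (p-1) := by positivity
  have hXj : ∀ j, Measurable fun ω => X ω j := fun j => (measurable_pi_apply j).comp hX
  set u : Fin d → ℝ := fun j => w j - wstar j with hudef
  set f : Ω → ℝ := fun ω => ∑ j, wstar j * X ω j - Y ω with hfdef
  set g : Ω → ℝ := fun ω => ∑ j, u j * X ω j with hgdef
  set w2 : Fin d → ℝ := fun j => 2 * wstar j - w j with hw2def
  have hsum_m : ∀ v : Fin d → ℝ, Measurable fun ω => ∑ j, v j * X ω j :=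
    fun v => Finset.measurable_sum _ fun j _ => (hXj j).const_mul _
  have hfm : Measurable f := (hsum_m wstar).sub hY
  have hgm : Measurable g := hsum_m u
  -- integrability of |∑ v_j X_j|^p
  have hsum_int : ∀ v : Fin d → ℝ, Integrable (fun ω => |∑ j, v j * X ω j|^p) P := by
    intro v
    have H : ∀ s : Finset (Fin d), Integrable (fun ω => |∑ j ∈ s, v j * X ω j|^p) P := by
      intro s
      induction s using Finset.induction_on with
      | empty =>
          simp only [Finset.sum_empty, abs_zero, Real.zero_rpow hp0.ne']
          exact integrable_const 0
      | @insert a s ha ih =>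
          have e : (fun ω => |∑ j ∈ insert a s, v j * X ω j|^p)
              = fun ω => |v a * X ω a + ∑ j ∈ s, v j * X ω j|^p := by
            funext ω; rw [Finset.sum_insert ha]
          rw [e]
          apply integrable_abs_rpow_add hp0.le ((hXj a).const_mul _)
            (Finset.measurable_sum s fun j _ => (hXj j).const_mul _) _ ih
          have e2 : (fun ω => |v a * X ω a|^p) = fun ω => |v a|^p * |X ω a|^p := by
            funext ω; rw [abs_mul, Real.mul_rpow (abs_nonneg _) (abs_nonneg _)]
          rw [e2]
          exact (hXp a).const_mul _
    exact H Finset.univ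
  have hint_v : ∀ v : Fin d → ℝ,
      Integrable (fun ω => |∑ j, v j * X ω j - Y ω|^p) P := fun v =>
    integrable_abs_rpow_sub hp0.le (hsum_m v) hY (hsum_int v) hYp
  have hint_f : Integrable (fun ω => |f ω|^p) P := hint_v wstar
  have hint_g : Integrable (fun ω => |g ω|^p) P := hsum_int u
  have hint_fg : Integrable (fun ω => |f ω + g ω|^p) P :=
    integrable_abs_rpow_add hp0.le hfm hgm hint_f hint_g
  have hint_fg' : Integrable (fun ω => |f ω - g ω|^p) P :=
    integrable_abs_rpow_sub hp0.le hfm hgm hint_f hint_g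
  have hmq : Measurable fun ω => |f ω|^(p-2) :=
    (Real.continuous_rpow_const (by linarith)).measurable.comp hfm.abs
  have hint_q : Integrable (fun ω => |f ω|^(p-2) * g ω^2) P := by
    apply Integrable.mono' (hint_f.add (hint_g.add hint_g))
    · exact (hmq.mul (hgm.pow_const 2)).aestronglyMeasurable
    · filter_upwards with ω
      rw [Real.norm_eq_abs,
        abs_of_nonneg (by positivity : (0:ℝ) ≤ |f ω|^(p-2) * g ω^2)]
      have h1 : |f ω|^(p-2) * g ω^2 = |f ω|^(p-2) * |g ω| * |g ω| := by
        rw [sq, ← abs_mul_abs_self (g ω)]; ring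
      rw [h1]
      simp only [Pi.add_apply]
      linarith [rpow_mul_le (x := f ω) (y := g ω) (z := g ω) hp]
  have hint_ij : ∀ i j : Fin d,
      Integrable (fun ω => |f ω|^(p-2) * (X ω i * X ω j)) P := by
    intro i j
    apply Integrable.mono' (hint_f.add ((hXp i).add (hXp j)))
    · exact (hmq.mul ((hXj i).mul (hXj j))).aestronglyMeasurable
    · filter_upwards with ω
      rw [Real.norm_eq_abs, abs_mul, abs_mul,
        abs_of_nonneg (Real.rpow_nonneg (abs_nonneg _) _), ← mul_assoc]
      simp only [Pi.add_apply]
      linarith [rpow_mul_le (x := f ω) (y := X ω i) (z := X ω j) hp]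
  -- identities
  have hid1 : ∀ ω, ∑ j, w j * X ω j - Y ω = f ω + g ω := by
    intro ω
    have hs : ∑ j, w j * X ω j
        = ∑ j, wstar j * X ω j + ∑ j, u j * X ω j := by
      rw [← Finset.sum_add_distrib]
      exact Finset.sum_congr rfl fun j _ => by rw [hudef]; ring
    simp only [hfdef, hgdef]
    linear_combination hs
  have hid2 : ∀ ω, ∑ j, w2 j * X ω j - Y ω = f ω - g ω := by
    intro ω
    have hs : ∑ j, w2 j * X ω j
        = ∑ j, wstar j * X ω j - ∑ j, u j * X ω j := by
      rw [← Finset.sum_sub_distrib]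
      exact Finset.sum_congr rfl fun j _ => by rw [hw2def, hudef]; ring
    simp only [hfdef, hgdef]
    linear_combination hs
  -- Rp values
  have hRw : Rp w = (∫ ω, |f ω + g ω|^p ∂P) / (p*(p-1)) := by
    simp only [hRp]
    rw [show (fun ω => |∑ j, w j * X ω j - Y ω|^p / (p*(p-1)))
        = fun ω => |f ω + g ω|^p / (p*(p-1)) from funext fun ω => by rw [hid1 ω]]
    exact integral_div _ _
  have hRw2 : Rp w2 = (∫ ω, |f ω - g ω|^p ∂P) / (p*(p-1)) := by
    simp only [hRp]
    rw [show (fun ω => |∑ j, w2 j * X ω j - Y ω|^p / (p*(p-1)))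
        = fun ω => |f ω - g ω|^p / (p*(p-1)) from funext fun ω => by rw [hid2 ω]]
    exact integral_div _ _
  have hRws : Rp wstar = (∫ ω, |f ω|^p ∂P) / (p*(p-1)) := by
    simp only [hRp]
    rw [show (fun ω => |∑ j, wstar j * X ω j - Y ω|^p / (p*(p-1)))
        = fun ω => |f ω|^p / (p*(p-1)) from funext fun ω => by rw [hfdef]]
    exact integral_div _ _
  -- combination of risks equals integral of symmetrized difference
  have hIsum : Rp w + Rp w2 - 2 * Rp wstar
      = ∫ ω, (|f ω + g ω|^p + |f ω - g ω|^p - 2*|f ω|^p) / (p*(p-1)) ∂P := by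
    rw [hRw, hRw2, hRws, integral_div]
    have hintA : Integrable (fun ω => |f ω + g ω|^p + |f ω - g ω|^p) P :=
      hint_fg.add hint_fg'
    have hintB : Integrable (fun ω => 2*|f ω|^p) P := hint_f.const_mul 2
    have e : ∫ ω, (|f ω + g ω|^p + |f ω - g ω|^p - 2*|f ω|^p) ∂P
        = (∫ ω, |f ω + g ω|^p ∂P) + (∫ ω, |f ω - g ω|^p ∂P)
          - 2*(∫ ω, |f ω|^p ∂P) := by
      rw [integral_sub hintA hintB, integral_add hint_fg hint_fg', integral_const_mul]
    rw [e]
    ring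
  have hmono : ∫ ω, (|f ω + g ω|^p + |f ω - g ω|^p - 2*|f ω|^p)/(p*(p-1)) ∂P
      ≤ ∫ ω, (2*p/(p-1) * (|f ω|^(p-2) * g ω^2) + p^p * |g ω|^p) ∂P := by
    apply integral_mono
    · exact ((hint_fg.add hint_fg').sub (hint_f.const_mul 2)).div_const _
    · exact (hint_q.const_mul _).add (hint_g.const_mul _)
    · intro ω
      exact key_div hp (f ω) (g ω)
  have hsplit : ∫ ω, (2*p/(p-1) * (|f ω|^(p-2) * g ω^2) + p^p * |g ω|^p) ∂P
      = 2*p/(p-1) * (∫ ω, |f ω|^(p-2) * g ω^2 ∂P) + p^p * (∫ ω, |g ω|^p ∂P) := by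
    rw [integral_add (hint_q.const_mul _) (hint_g.const_mul _),
      integral_const_mul, integral_const_mul]
  -- quadratic form identity
  have hquad : (w - wstar) ⬝ᵥ (Hp *ᵥ (w - wstar)) = ∫ ω, |f ω|^(p-2) * g ω^2 ∂P := by
    have e1 : (fun ω => |f ω|^(p-2) * g ω^2)
        = fun ω => ∑ i, ∑ j, (u i * u j) * (|f ω|^(p-2) * (X ω i * X ω j)) := by
      funext ω
      rw [sq]
      simp only [hgdef]
      rw [Finset.sum_mul_sum, Finset.mul_sum]
      refine Finset.sum_congr rfl fun i _ => ?_
      rw [Finset.mul_sum]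
      exact Finset.sum_congr rfl fun j _ => by ring
    rw [e1]
    rw [integral_finset_sum _ (fun i _ =>
      integrable_finset_sum _ (fun j _ => ((hint_ij i j).const_mul _)))]
    have e2 : ∀ i, ∫ ω, ∑ j, (u i * u j) * (|f ω|^(p-2) * (X ω i * X ω j)) ∂P
        = ∑ j, (u i * u j) * ∫ ω, |f ω|^(p-2) * (X ω i * X ω j) ∂P := by
      intro i
      rw [integral_finset_sum _ (fun j _ => ((hint_ij i j).const_mul _))]
      exact Finset.sum_congr rfl fun j _ => integral_const_mul _ _
    rw [hHp]
    simp only [dotProduct, Matrix.mulVec, Matrix.of_apply]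
    rw [Finset.sum_congr rfl fun i (_ : i ∈ Finset.univ) => e2 i]
    refine Finset.sum_congr rfl fun i _ => ?_
    rw [Finset.mul_sum]
    refine Finset.sum_congr rfl fun j _ => ?_
    have : (w - wstar) i = u i := by rw [hudef]; simp
    have h2 : (w - wstar) j = u j := by rw [hudef]; simp
    rw [this, h2]
    simp only [hfdef]
    ring
  have hgoal2 : ∫ ω, |∑ j, (w j - wstar j) * X ω j|^p ∂P = ∫ ω, |g ω|^p ∂P := by
    simp only [hgdef, hudef]
  calc Rp w - Rp wstar ≤ Rp w + Rp w2 - 2 * Rp wstar := by linarith [hstar w2]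
    _ = ∫ ω, (|f ω + g ω|^p + |f ω - g ω|^p - 2*|f ω|^p)/(p*(p-1)) ∂P := hIsum
    _ ≤ ∫ ω, (2*p/(p-1) * (|f ω|^(p-2) * g ω^2) + p^p * |g ω|^p) ∂P := hmono
    _ = 2*p/(p-1) * (∫ ω, |f ω|^(p-2) * g ω^2 ∂P) + p^p * (∫ ω, |g ω|^p ∂P) := hsplit
    _ = (2 * p / (p - 1)) * ((w - wstar) ⬝ᵥ (Hp *ᵥ (w - wstar)))
        + p ^ p * ∫ ω, |∑ j, (w j - wstar j) * X ω j| ^ p ∂P := by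
      rw [hquad, hgoal2]
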